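/- Let p be prime, α > 0, r < 0. With K_α as above and C := -∫_{1<|y|_p≤p^{-r}} K_α(y) dy ∈ (0,1), the Laplace transform G_r(s) contains the singular term -(p^r/s)·C as s → 0⁺ (with s real), and hence lim_{s→0⁺} |G_r(s)| = ∞. Consequently, F(0) := G_r(0)/(1+G_r(0)) interpreted as lim_{s→0⁺} G_r(s)/(1+G_r(s)) equals 1 (recurrence of the associated Markov process). -/

import Mathlib

open MeasureTheory Filter Topology

noncomputable section

variable (p : ℕ) [Fact p.Prime]

instance : MeasurableSpace ℚ_[p] := borel _
instance : BorelSpace ℚ_[p] := ⟨rfl⟩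

/-- The closed unit ball of `ℚ_[p]` (i.e. `ℤ_p`) as a positive compact set. -/
def padicUnitBall : TopologicalSpace.PositiveCompacts ℚ_[p] where
  carrier := Metric.closedBall 0 1
  isCompact' := isCompact_closedBall 0 1
  interior_nonempty' := ⟨0, mem_interior_iff_mem_nhds.2 (Metric.closedBall_mem_nhds 0 one_pos)⟩

/-- Haar measure on `ℚ_[p]` normalized so that `ℤ_p` has measure 1. -/
def μp : Measure ℚ_[p] := Measure.addHaarMeasure (padicUnitBall p)

/-- The heat kernel `Z_r(x,t) = ∫ χ(-xξ) e^{-t(⟨ξ⟩^α - p^{rα})} dξ`, where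
`⟨ξ⟩ = max(|ξ|_p, p^r)`. -/
def heatKernel (χ : AddChar ℚ_[p] ℂ) (r : ℤ) (α t : ℝ) (x : ℚ_[p]) : ℂ :=
  ∫ ξ, χ (-(x*ξ)) *
    Complex.exp (-((t * ((max ‖ξ‖ ((p:ℝ)^r)) ^ α - (p:ℝ) ^ ((r:ℝ)*α)) : ℝ) : ℂ)) ∂(μp p)

/-- The kernel `K_α(y)`, supported on the ball `|y|_p ≤ p^{-r}`. -/
def Kfun (r : ℤ) (α : ℝ) (y : ℚ_[p]) : ℝ :=
  if ‖y‖ ≤ (p:ℝ)^(-r) then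
    (1 - (p:ℝ)^α)/(1 - (p:ℝ)^(-α-1)) * ‖y‖ ^ (-α-1)
      + (p:ℝ)^((r:ℝ)*(α+1)) * (1 - (p:ℝ)^α)/(1 - (p:ℝ)^(α+1))
  else 0

/-- `u(x,t) = ∫_{|ξ|_p ≤ 1} χ(-xξ) e^{-t(⟨ξ⟩^α - p^{rα})} dξ`, the solution with initial
datum the indicator of the unit ball. -/
def uball (χ : AddChar ℚ_[p] ℂ) (r : ℤ) (α t : ℝ) (x : ℚ_[p]) : ℂ :=
  ∫ ξ in {ξ : ℚ_[p] | ‖ξ‖ ≤ 1}, χ (-(x*ξ)) *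
    Complex.exp (-((t * ((max ‖ξ‖ ((p:ℝ)^r)) ^ α - (p:ℝ) ^ ((r:ℝ)*α)) : ℝ) : ℂ)) ∂(μp p)

/-- The survival probability `S(t) = ∫_{|x|_p ≤ 1} u(x,t) dx`. -/
def Sfun (χ : AddChar ℚ_[p] ℂ) (r : ℤ) (α t : ℝ) : ℂ :=
  ∫ x in {x : ℚ_[p] | ‖x‖ ≤ 1}, uball p χ r α t x ∂(μp p)

/-- The solution `u(x,t) = (Z_r(·,t) ∗ φ)(x)` of the Cauchy problem, with `u(x,0) = φ(x)`. -/
def sol (χ : AddChar ℚ_[p] ℂ) (r : ℤ) (α : ℝ) (φ : ℚ_[p] → ℂ) (t : ℝ) (x : ℚ_[p]) : ℂ :=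
  if t = 0 then φ x else ∫ y, heatKernel p χ r α t (x-y) * φ y ∂(μp p)

/-- The pseudodifferential operator `H^α` with symbol `⟨ξ⟩^α - p^{rα}`:
`H^α g = 𝓕⁻¹[(⟨ξ⟩^α - p^{rα}) 𝓕g]`. -/
def Hop (χ : AddChar ℚ_[p] ℂ) (r : ℤ) (α : ℝ) (g : ℚ_[p] → ℂ) (x : ℚ_[p]) : ℂ :=
  ∫ ξ, χ (-(x*ξ)) * (((max ‖ξ‖ ((p:ℝ)^r)) ^ α - (p:ℝ)^((r:ℝ)*α) : ℝ) : ℂ) *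
    (∫ y, χ (ξ*y) * g y ∂(μp p)) ∂(μp p)

/-- The Laplace transform `G_r(s)` of the density `g(t)`. -/
def Gr (χ : AddChar ℚ_[p] ℂ) (r : ℤ) (α : ℝ) (s : ℝ) : ℂ :=
  ∫ y in {y : ℚ_[p] | 1 < ‖y‖ ∧ ‖y‖ ≤ (p:ℝ)^(-r)}, (Kfun p r α y : ℂ) *
    ∫ ξ in {ξ : ℚ_[p] | ‖ξ‖ ≤ 1},
      χ (-(ξ*y)) / ((s:ℂ) + (((max ‖ξ‖ ((p:ℝ)^r)) ^ α - (p:ℝ)^((r:ℝ)*α) : ℝ) : ℂ)) ∂(μp p) ∂(μp p)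
section ball
variable (p : ℕ) [Fact p.Prime]

lemma pR_one_lt : (1:ℝ) < p := by exact_mod_cast (Fact.out : p.Prime).one_lt
lemma pR_pos : (0:ℝ) < p := lt_trans one_pos (pR_one_lt p)

/-- The closed ball of radius `p^k`. -/
def Bset (k : ℤ) : Set ℚ_[p] := {x | ‖x‖ ≤ (p:ℝ)^k}

lemma Bset_closed (k : ℤ) : IsClosed (Bset p k) :=
  isClosed_le continuous_norm continuous_const

lemma Bset_meas (k : ℤ) : MeasurableSet (Bset p k) := (Bset_closed p k).measurableSet

lemma Bset_zero : Bset p 0 = Metric.closedBall 0 1 := by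
  ext x; simp [Bset, Metric.mem_closedBall, dist_zero_right]

lemma Bset_compact (k : ℤ) : IsCompact (Bset p k) := by
  have : Bset p k = Metric.closedBall 0 ((p:ℝ)^k) := by
    ext x; simp [Bset, Metric.mem_closedBall, dist_zero_right]
  rw [this]; exact isCompact_closedBall 0 _

open Pointwise in
lemma Bset_succ (k : ℤ) :
    Bset p (k+1) = ⋃ c ∈ Finset.range p, (((c:ℚ_[p]) * (p:ℚ_[p])^(-(k+1))) +ᵥ Bset p k) := by
  have hp0 : ((p:ℚ_[p])) ≠ 0 := by
    exact_mod_cast Nat.cast_ne_zero.2 (Fact.out : p.Prime).ne_zero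
  have hqP : (p:ℚ_[p])^(-(k+1)) * (p:ℚ_[p])^(k+1) = 1 := by
    rw [← zpow_add₀ hp0, neg_add_cancel, zpow_zero]
  ext x
  simp only [Set.mem_iUnion, Finset.mem_range, Set.mem_vadd_set_iff_neg_vadd_mem,
    vadd_eq_add, Bset, Set.mem_setOf_eq]
  constructor
  · intro hx
    have hu : ‖(p:ℚ_[p])^(k+1) * x‖ ≤ 1 := by
      rw [norm_mul, Padic.norm_p_zpow]
      calc (p:ℝ)^(-(k+1)) * ‖x‖ ≤ (p:ℝ)^(-(k+1)) * (p:ℝ)^(k+1) := by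
            apply mul_le_mul_of_nonneg_left hx (zpow_nonneg (le_of_lt (pR_pos p)) _)
        _ = 1 := by rw [← zpow_add₀ (ne_of_gt (pR_pos p)), neg_add_cancel, zpow_zero]
    set U : ℤ_[p] := ⟨(p:ℚ_[p])^(k+1) * x, hu⟩ with hU
    refine ⟨U.appr 1, by simpa using U.appr_lt 1, ?_⟩
    have hspec := PadicInt.appr_spec 1 U
    rw [← PadicInt.norm_le_pow_iff_mem_span_pow] at hspec
    rw [PadicInt.norm_def] at hspec
    push_cast at hspec
    have hspec' : ‖(p:ℚ_[p])^(k+1) * x - (U.appr 1 : ℚ_[p])‖ ≤ (p:ℝ)^(-1:ℤ) := by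
      simpa using hspec
    have key : -((U.appr 1 : ℚ_[p]) * (p:ℚ_[p]) ^ (-(k + 1))) + x
        = (p:ℚ_[p])^(-(k+1)) * ((p:ℚ_[p])^(k+1) * x - (U.appr 1 : ℚ_[p])) := by
      rw [mul_sub, ← mul_assoc, hqP, one_mul]; ring
    rw [key, norm_mul, Padic.norm_p_zpow, neg_neg]
    calc (p:ℝ)^(k+1) * ‖(p:ℚ_[p])^(k+1) * x - (U.appr 1 : ℚ_[p])‖
        ≤ (p:ℝ)^(k+1) * (p:ℝ)^(-1:ℤ) :=
          mul_le_mul_of_nonneg_left hspec' (zpow_nonneg (le_of_lt (pR_pos p)) _)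
      _ = (p:ℝ)^k := by rw [← zpow_add₀ (ne_of_gt (pR_pos p))]; norm_num
  · rintro ⟨c, hc, hz⟩
    have h1 : ‖(c:ℚ_[p]) * (p:ℚ_[p])^(-(k+1))‖ ≤ (p:ℝ)^(k+1) := by
      rw [norm_mul, Padic.norm_p_zpow, neg_neg]
      have : ‖((c:ℤ):ℚ_[p])‖ ≤ 1 := Padic.norm_int_le_one _
      push_cast at this
      calc ‖(c:ℚ_[p])‖ * (p:ℝ)^(k+1) ≤ 1 * (p:ℝ)^(k+1) :=
            mul_le_mul_of_nonneg_right this (zpow_nonneg (le_of_lt (pR_pos p)) _)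
        _ = (p:ℝ)^(k+1) := one_mul _
    have hna := Padic.nonarchimedean ((c:ℚ_[p]) * (p:ℚ_[p])^(-(k+1)))
      (-((c:ℚ_[p]) * (p:ℚ_[p])^(-(k+1))) + x)
    simp only [add_neg_cancel_left] at hna
    refine le_trans hna (max_le h1 ?_)
    calc ‖-((c:ℚ_[p]) * (p:ℚ_[p])^(-(k+1))) + x‖ ≤ (p:ℝ)^k := hz
      _ ≤ (p:ℝ)^(k+1) := by
          apply zpow_le_zpow_right₀ (le_of_lt (pR_one_lt p)); omega

end ball
open Pointwise
section meas
variable (p : ℕ) [Fact p.Prime]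

instance : (μp p).IsAddLeftInvariant := by unfold μp; infer_instance
instance : (μp p).IsAddHaarMeasure := by unfold μp; infer_instance
instance : VAddInvariantMeasure ℚ_[p] ℚ_[p] (μp p) :=
  ⟨fun c s hs => by simpa using measure_preimage_add (μp p) c s⟩

lemma measB_succ (k : ℤ) : μp p (Bset p (k+1)) = p * μp p (Bset p k) := by
  classical
  rw [Bset_succ]
  have hdisj : (↑(Finset.range p) : Set ℕ).PairwiseDisjoint
      (fun c : ℕ => ((c:ℚ_[p]) * (p:ℚ_[p])^(-(k+1))) +ᵥ Bset p k) := by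
    intro c hc c' hc' hne
    simp only [Finset.coe_range, Set.mem_Iio] at hc hc'
    simp only [Function.onFun]
    rw [Set.disjoint_left]
    intro x hx hx'
    rw [Set.mem_vadd_set_iff_neg_vadd_mem] at hx hx'
    simp only [vadd_eq_add, Bset, Set.mem_setOf_eq] at hx hx'
    have hdiff : (-((c':ℚ_[p]) * (p:ℚ_[p])^(-(k+1))) + x)
        - (-((c:ℚ_[p]) * (p:ℚ_[p])^(-(k+1))) + x)
        = ((c:ℤ) - (c':ℤ) : ℤ) * (p:ℚ_[p])^(-(k+1)) := by push_cast; ring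
    have hnorm1 : ‖(((c:ℤ) - (c':ℤ) : ℤ) : ℚ_[p])‖ = 1 := by
      refine le_antisymm (Padic.norm_int_le_one _) ?_
      by_contra h
      push_neg at h
      rw [Padic.norm_intCast_lt_one_iff] at h
      have : ((c:ℤ) - c' : ℤ) = 0 := Int.eq_zero_of_abs_lt_dvd h (by rw [abs_sub_lt_iff]; omega)
      omega
    have hle : ‖(((c:ℤ) - (c':ℤ) : ℤ) : ℚ_[p]) * (p:ℚ_[p])^(-(k+1))‖ ≤ (p:ℝ)^k := by
      rw [← hdiff]
      rw [sub_eq_add_neg]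
      refine le_trans (Padic.nonarchimedean _ _) (max_le hx' ?_)
      rw [norm_neg]; exact hx
    rw [norm_mul, hnorm1, one_mul, Padic.norm_p_zpow, neg_neg] at hle
    have : (p:ℝ)^(k+1) ≤ (p:ℝ)^k := hle
    have h2 := zpow_lt_zpow_right₀ (pR_one_lt p) (lt_add_one k)
    linarith
  rw [measure_biUnion_finset hdisj
    (fun c _ => (Bset_meas p k).const_vadd _)]
  have hv : ∀ c : ℕ, μp p (((c:ℚ_[p]) * (p:ℚ_[p])^(-(k+1))) +ᵥ Bset p k) = μp p (Bset p k) :=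
    fun c => measure_vadd _ _ _
  rw [Finset.sum_congr rfl (fun c _ => hv c), Finset.sum_const, Finset.card_range, nsmul_eq_mul]

lemma measB (k : ℤ) : μp p (Bset p k) = ENNReal.ofReal ((p:ℝ)^k) := by
  have hbase : μp p (Bset p 0) = 1 := by
    rw [Bset_zero]; exact Measure.addHaarMeasure_self
  have hofR : ∀ m : ℤ, ENNReal.ofReal ((p:ℝ)^(m+1)) = p * ENNReal.ofReal ((p:ℝ)^m) := by
    intro m
    rw [zpow_add₀ (ne_of_gt (pR_pos p)), zpow_one, mul_comm,
      ENNReal.ofReal_mul (le_of_lt (pR_pos p)), ENNReal.ofReal_natCast]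
  induction k using Int.induction_on with
  | zero => simpa using hbase
  | succ n ih => rw [measB_succ, ih, hofR]
  | pred n ih =>
    have hkey := measB_succ p (-(n:ℤ)-1)
    rw [show (-(n:ℤ)-1+1) = -(n:ℤ) by ring, ih] at hkey
    have : ENNReal.ofReal ((p:ℝ)^(-(n:ℤ))) = p * ENNReal.ofReal ((p:ℝ)^(-(n:ℤ)-1)) := by
      rw [← hofR]; norm_num
    rw [this] at hkey
    have hp0 : (p : ENNReal) ≠ 0 := by
      exact_mod_cast Nat.cast_ne_zero.2 (Fact.out : p.Prime).ne_zero
    have := (ENNReal.mul_right_inj hp0 (ENNReal.natCast_ne_top p)).1 hkey.symm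
    exact this

lemma measB_ne_top (k : ℤ) : μp p (Bset p k) ≠ ⊤ := by
  rw [measB]; exact ENNReal.ofReal_ne_top

lemma measB_toReal (k : ℤ) : (μp p (Bset p k)).toReal = (p:ℝ)^k := by
  rw [measB, ENNReal.toReal_ofReal (le_of_lt (zpow_pos (pR_pos p) k))]

end meas
section char
variable {p : ℕ} [Fact p.Prime]

lemma chi_norm_one (χ : AddChar ℚ_[p] ℂ) (hχ : ∀ y : ℚ_[p], χ y = 1 ↔ ‖y‖ ≤ 1)
    (z : ℚ_[p]) : ‖χ z‖ = 1 := by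
  obtain ⟨k, hk⟩ := pow_unbounded_of_one_lt ‖z‖ (pR_one_lt p)
  have hle : ‖((p^k : ℕ):ℚ_[p]) * z‖ ≤ 1 := by
    push_cast
    rw [norm_mul, Padic.norm_p_pow]
    calc (p:ℝ)^(-(k:ℤ)) * ‖z‖ ≤ (p:ℝ)^(-(k:ℤ)) * (p:ℝ)^(k:ℤ) := by
          apply mul_le_mul_of_nonneg_left _ (zpow_nonneg (le_of_lt (pR_pos p)) _)
          rw [zpow_natCast]; exact le_of_lt hk
      _ = 1 := by rw [← zpow_add₀ (ne_of_gt (pR_pos p)), neg_add_cancel, zpow_zero]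
  have h1 : χ ((p^k : ℕ) • z) = 1 := by
    rw [hχ]; simpa [nsmul_eq_mul] using hle
  rw [AddChar.map_nsmul_eq_pow] at h1
  have h2 : ‖χ z‖ ^ (p^k) = 1 := by rw [← norm_pow, h1, norm_one]
  have hpk : p^k ≠ 0 := pow_ne_zero _ (Fact.out : p.Prime).ne_zero
  rcases lt_trichotomy ‖χ z‖ 1 with h | h | h
  · exact absurd h2 (ne_of_lt (pow_lt_one₀ (norm_nonneg _) h hpk))
  · exact h
  · exact absurd h2 (ne_of_gt (one_lt_pow₀ h hpk))

lemma chi_cont (χ : AddChar ℚ_[p] ℂ) (hχ : ∀ y : ℚ_[p], χ y = 1 ↔ ‖y‖ ≤ 1) :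
    Continuous χ := by
  rw [continuous_iff_continuousAt]
  intro x
  have hev : (fun z => χ z) =ᶠ[nhds x] (fun _ => χ x) := by
    filter_upwards [Metric.closedBall_mem_nhds x one_pos] with z hz
    have h1 : χ (z - x) = 1 := (hχ _).2 (by simpa [dist_eq_norm] using hz)
    calc χ z = χ (x + (z - x)) := by rw [add_sub_cancel]
      _ = χ x * χ (z - x) := AddChar.map_add_eq_mul χ _ _
      _ = χ x := by rw [h1, mul_one]
  exact ContinuousAt.congr continuousAt_const hev.symm

end char

section denom
variable (p : ℕ) [Fact p.Prime]

lemma zpow_rpow (k : ℤ) (β : ℝ) : ((p:ℝ)^k) ^ β = (p:ℝ)^((k:ℝ)*β) := by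
  rw [← Real.rpow_intCast (p:ℝ) k, ← Real.rpow_mul (le_of_lt (pR_pos p))]

/-- The symbol `⟨ξ⟩^α - p^{rα}`. -/
def Dfun (r : ℤ) (α : ℝ) (ξ : ℚ_[p]) : ℝ := (max ‖ξ‖ ((p:ℝ)^r)) ^ α - (p:ℝ)^((r:ℝ)*α)

lemma Dfun_cont (r : ℤ) (α : ℝ) (hα : 0 < α) : Continuous (Dfun p r α) := by
  apply Continuous.sub _ continuous_const
  exact Continuous.rpow_const (continuous_norm.max continuous_const)
    (fun x => Or.inr hα.le)

lemma Dfun_nonneg (r : ℤ) (α : ℝ) (hα : 0 < α) (ξ : ℚ_[p]) : 0 ≤ Dfun p r α ξ := by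
  rw [Dfun, sub_nonneg, ← zpow_rpow]
  exact Real.rpow_le_rpow (le_of_lt (zpow_pos (pR_pos p) r)) (le_max_right _ _) hα.le

lemma Dfun_zero_on (r : ℤ) (α : ℝ) {ξ : ℚ_[p]} (hξ : ξ ∈ Bset p r) : Dfun p r α ξ = 0 := by
  rw [Dfun, max_eq_right hξ, zpow_rpow, sub_self]

lemma Dfun_shell (r : ℤ) (α : ℝ) (hα : 0 < α) {ξ : ℚ_[p]} (hξ : ξ ∉ Bset p r) :
    ((p:ℝ)^(r+1)) ^ α - (p:ℝ)^((r:ℝ)*α) ≤ Dfun p r α ξ := by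
  have h1 : (p:ℝ)^(r+1) ≤ ‖ξ‖ := by
    by_contra h
    push_neg at h
    exact hξ ((Padic.norm_le_pow_iff_norm_lt_pow_add_one ξ r).2 h)
  rw [Dfun]
  apply sub_le_sub_right
  apply Real.rpow_le_rpow (le_of_lt (zpow_pos (pR_pos p) _)) _ hα.le
  exact le_trans h1 (le_max_left _ _)

lemma delta_pos (r : ℤ) (α : ℝ) (hα : 0 < α) :
    0 < ((p:ℝ)^(r+1)) ^ α - (p:ℝ)^((r:ℝ)*α) := by
  rw [sub_pos, ← zpow_rpow]
  exact Real.rpow_lt_rpow (le_of_lt (zpow_pos (pR_pos p) r))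
    (zpow_lt_zpow_right₀ (pR_one_lt p) (lt_add_one r)) hα

end denom
section core
variable {p : ℕ} [Fact p.Prime]

/-- The inner integrand. -/
def Ffun (p : ℕ) [Fact p.Prime] (χ : AddChar ℚ_[p] ℂ) (r : ℤ) (α s : ℝ) (y ξ : ℚ_[p]) : ℂ :=
  χ (-(ξ*y)) / ((s:ℂ) + ((Dfun p r α ξ : ℝ):ℂ))

lemma Gr_eq (χ : AddChar ℚ_[p] ℂ) (r : ℤ) (α s : ℝ) :
    Gr p χ r α s = ∫ y in (Bset p (-r) \ Bset p 0),
      (Kfun p r α y : ℂ) * ∫ ξ in Bset p 0, Ffun p χ r α s y ξ ∂(μp p) ∂(μp p) := by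
  have h1 : {y : ℚ_[p] | 1 < ‖y‖ ∧ ‖y‖ ≤ (p:ℝ)^(-r)} = Bset p (-r) \ Bset p 0 := by
    ext y
    simp only [Bset, Set.mem_diff, Set.mem_setOf_eq, zpow_zero, not_le]
    tauto
  have h2 : {ξ : ℚ_[p] | ‖ξ‖ ≤ 1} = Bset p 0 := by
    ext ξ; simp [Bset]
  rw [Gr, h1, h2]; rfl

variable (χ : AddChar ℚ_[p] ℂ) (r : ℤ) (α : ℝ)

lemma denom_eq (s : ℝ) (ξ : ℚ_[p]) :
    (s:ℂ) + ((Dfun p r α ξ : ℝ):ℂ) = ((s + Dfun p r α ξ : ℝ):ℂ) := by push_cast; ring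

lemma denom_pos (hα : 0 < α) {s : ℝ} (hs : 0 < s) (ξ : ℚ_[p]) : 0 < s + Dfun p r α ξ := by
  have := Dfun_nonneg p r α hα ξ; linarith

lemma Fnorm (hχ : ∀ y : ℚ_[p], χ y = 1 ↔ ‖y‖ ≤ 1) (hα : 0 < α) {s : ℝ} (hs : 0 < s)
    (y ξ : ℚ_[p]) : ‖Ffun p χ r α s y ξ‖ = (s + Dfun p r α ξ)⁻¹ := by
  rw [Ffun, denom_eq, norm_div, chi_norm_one χ hχ, Complex.norm_real,
    Real.norm_eq_abs, abs_of_pos (denom_pos r α hα hs ξ), one_div]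

lemma Fcont (hχ : ∀ y : ℚ_[p], χ y = 1 ↔ ‖y‖ ≤ 1) (hα : 0 < α) {s : ℝ} (hs : 0 < s) :
    Continuous (fun q : ℚ_[p] × ℚ_[p] => Ffun p χ r α s q.1 q.2) := by
  apply Continuous.div
  · exact (chi_cont χ hχ).comp ((continuous_snd.mul continuous_fst).neg)
  · exact continuous_const.add
      (Complex.continuous_ofReal.comp ((Dfun_cont p r α hα).comp continuous_snd))
  · intro q
    rw [denom_eq]
    exact Complex.ofReal_ne_zero.2 (ne_of_gt (denom_pos r α hα hs q.2))

lemma Fcont_y (hχ : ∀ y : ℚ_[p], χ y = 1 ↔ ‖y‖ ≤ 1) (hα : 0 < α) {s : ℝ} (hs : 0 < s)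
    (ξ : ℚ_[p]) : Continuous (fun y => Ffun p χ r α s y ξ) :=
  (Fcont χ r α hχ hα hs).comp (continuous_id.prodMk continuous_const)

lemma Fcont_xi (hχ : ∀ y : ℚ_[p], χ y = 1 ↔ ‖y‖ ≤ 1) (hα : 0 < α) {s : ℝ} (hs : 0 < s)
    (y : ℚ_[p]) : Continuous (fun ξ => Ffun p χ r α s y ξ) :=
  (Fcont χ r α hχ hα hs).comp (continuous_const.prodMk continuous_id)

lemma F_integrableOn (hχ : ∀ y : ℚ_[p], χ y = 1 ↔ ‖y‖ ≤ 1) (hα : 0 < α) {s : ℝ}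
    (hs : 0 < s) (y : ℚ_[p]) (k : ℤ) :
    MeasureTheory.IntegrableOn (fun ξ => Ffun p χ r α s y ξ) (Bset p k) (μp p) :=
  ((Fcont_xi χ r α hχ hα hs y).continuousOn).integrableOn_compact (Bset_compact p k)

lemma small_eq (hχ : ∀ y : ℚ_[p], χ y = 1 ↔ ‖y‖ ≤ 1) (hα : 0 < α) {s : ℝ} (hs : 0 < s)
    {y : ℚ_[p]} (hy : ‖y‖ ≤ (p:ℝ)^(-r)) :
    ∫ ξ in Bset p r, Ffun p χ r α s y ξ ∂(μp p) = (((p:ℝ)^r / s : ℝ) : ℂ) := by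
  rw [MeasureTheory.setIntegral_congr_fun (Bset_meas p r) (g := fun _ => ((1/s : ℝ):ℂ))]
  · rw [MeasureTheory.setIntegral_const, measureReal_def, measB_toReal, Complex.real_smul]
    push_cast
    rw [mul_one_div]
  · intro ξ hξ
    have hχ1 : χ (-(ξ*y)) = 1 := by
      rw [hχ, norm_neg, norm_mul]
      calc ‖ξ‖ * ‖y‖ ≤ (p:ℝ)^r * (p:ℝ)^(-r) := by
            apply mul_le_mul hξ hy (norm_nonneg _) (le_of_lt (zpow_pos (pR_pos p) _))
        _ = 1 := by rw [← zpow_add₀ (ne_of_gt (pR_pos p)), add_neg_cancel, zpow_zero]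
    rw [Ffun, hχ1, Dfun_zero_on p r α hξ]
    push_cast
    rw [add_zero]

lemma inner_split (hχ : ∀ y : ℚ_[p], χ y = 1 ↔ ‖y‖ ≤ 1) (hα : 0 < α) (hr : r < 0) {s : ℝ}
    (hs : 0 < s) {y : ℚ_[p]} (hy : ‖y‖ ≤ (p:ℝ)^(-r)) :
    ∫ ξ in Bset p 0, Ffun p χ r α s y ξ ∂(μp p)
      = (((p:ℝ)^r / s : ℝ) : ℂ) + ∫ ξ in (Bset p 0 \ Bset p r), Ffun p χ r α s y ξ ∂(μp p) := by
  have hsub : Bset p r ⊆ Bset p 0 := by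
    intro ξ hξ
    calc ‖ξ‖ ≤ (p:ℝ)^r := hξ
      _ ≤ (p:ℝ)^(0:ℤ) := zpow_le_zpow_right₀ (le_of_lt (pR_one_lt p)) (le_of_lt hr)
  have hu := MeasureTheory.setIntegral_union (f := fun ξ => Ffun p χ r α s y ξ)
    (μ := μp p) Set.disjoint_sdiff_right
    ((Bset_meas p 0).diff (Bset_meas p r))
    (F_integrableOn χ r α hχ hα hs y r)
    ((F_integrableOn χ r α hχ hα hs y 0).mono_set Set.diff_subset)
  rw [Set.union_diff_cancel hsub] at hu
  rw [hu, small_eq χ r α hχ hα hs hy]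

end core
section core2
open MeasureTheory
variable {p : ℕ} [Fact p.Prime] (χ : AddChar ℚ_[p] ℂ) (r : ℤ) (α : ℝ)

lemma shell_meas_lt_top (k : ℤ) : μp p (Bset p 0 \ Bset p k) < ⊤ :=
  lt_of_le_of_lt (measure_mono Set.diff_subset)
    (lt_of_le_of_ne le_top (measB_ne_top p 0))

lemma Rem_bound (hχ : ∀ y : ℚ_[p], χ y = 1 ↔ ‖y‖ ≤ 1) (hα : 0 < α) {s : ℝ} (hs : 0 < s)
    (y : ℚ_[p]) :
    ‖∫ ξ in (Bset p 0 \ Bset p r), Ffun p χ r α s y ξ ∂(μp p)‖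
      ≤ (((p:ℝ)^(r+1)) ^ α - (p:ℝ)^((r:ℝ)*α))⁻¹ * (μp p (Bset p 0 \ Bset p r)).toReal := by
  set δ := ((p:ℝ)^(r+1)) ^ α - (p:ℝ)^((r:ℝ)*α) with hδdef
  have hδ : 0 < δ := delta_pos p r α hα
  apply norm_setIntegral_le_of_norm_le_const (shell_meas_lt_top r)
  · intro ξ hξ
    rw [Fnorm χ r α hχ hα hs]
    apply inv_anti₀ hδ
    have h1 := Dfun_shell p r α hα hξ.2
    have h2 := denom_pos r α hα hs ξ
    have h3 := Dfun_nonneg p r α hα ξ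
    rw [hδdef]
    linarith

lemma Rem_cont (hχ : ∀ y : ℚ_[p], χ y = 1 ↔ ‖y‖ ≤ 1) (hα : 0 < α) {s : ℝ} (hs : 0 < s)
    (S : Set ℚ_[p]) (hS : μp p S < ⊤) :
    Continuous (fun y => ∫ ξ in S, Ffun p χ r α s y ξ ∂(μp p)) := by
  apply continuous_of_dominated (bound := fun _ => s⁻¹)
  · exact fun y => ((Fcont_xi χ r α hχ hα hs y).aestronglyMeasurable).restrict
  · intro y
    apply MeasureTheory.ae_of_all
    intro ξ
    rw [Fnorm χ r α hχ hα hs]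
    apply inv_anti₀ hs
    have := Dfun_nonneg p r α hα ξ
    linarith
  · exact integrableOn_const hS.ne
  · exact MeasureTheory.ae_of_all _ (fun ξ => Fcont_y χ r α hχ hα hs ξ)

lemma ann_eq_inter (hr : r < 0) : Bset p (-r) \ Bset p 0
    = Bset p (-r) ∩ {x : ℚ_[p] | (p:ℝ)^((0:ℤ)+1) ≤ ‖x‖} := by
  ext x
  have hiff := Padic.norm_le_pow_iff_norm_lt_pow_add_one x 0
  simp only [Set.mem_diff, Set.mem_inter_iff, Set.mem_setOf_eq, Bset]
  constructor
  · rintro ⟨ha, hb⟩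
    refine ⟨ha, ?_⟩
    by_contra hcon
    push_neg at hcon
    exact hb (hiff.2 hcon)
  · rintro ⟨ha, hb⟩
    exact ⟨ha, fun hcon => absurd (hiff.1 hcon) (not_lt.2 hb)⟩

lemma ann_compact (hr : r < 0) : IsCompact (Bset p (-r) \ Bset p 0) := by
  rw [ann_eq_inter r hr]
  exact (Bset_compact p (-r)).of_isClosed_subset
    ((Bset_closed p (-r)).inter (isClosed_le continuous_const continuous_norm))
    Set.inter_subset_left

lemma ann_one_lt_norm (hr : r < 0) {y : ℚ_[p]} (hy : y ∈ Bset p (-r) \ Bset p 0) :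
    1 < ‖y‖ := by
  have := hy.2
  simp only [Bset, Set.mem_setOf_eq, zpow_zero, not_le] at this
  exact this

lemma K_contOn (hα : 0 < α) (hr : r < 0) :
    ContinuousOn (Kfun p r α) (Bset p (-r) \ Bset p 0) := by
  apply ContinuousOn.congr (f := fun y : ℚ_[p] =>
    (1 - (p:ℝ)^α)/(1 - (p:ℝ)^(-α-1)) * ‖y‖ ^ (-α-1)
      + (p:ℝ)^((r:ℝ)*(α+1)) * (1 - (p:ℝ)^α)/(1 - (p:ℝ)^(α+1)))
  · refine ContinuousOn.add (ContinuousOn.mul continuousOn_const ?_) continuousOn_const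
    exact ContinuousOn.rpow_const (continuous_norm.continuousOn)
      (fun x hx => Or.inl (ne_of_gt (lt_trans one_pos (ann_one_lt_norm r hr hx))))
  · intro y hy
    have h2 : ‖y‖ ≤ (p:ℝ)^(-r) := hy.1
    simp only [Kfun]
    rw [if_pos h2]

lemma one_lt_rpow_alpha (hα : 0 < α) : 1 < (p:ℝ)^α :=
  Real.one_lt_rpow_iff_of_pos (pR_pos p) |>.2 (Or.inl ⟨pR_one_lt p, hα⟩)

lemma Kden1_pos (hα : 0 < α) : 0 < 1 - (p:ℝ)^(-α-1) := by
  have : (p:ℝ)^(-α-1) < 1 :=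
    Real.rpow_lt_one_of_one_lt_of_neg (pR_one_lt p) (by linarith)
  linarith

lemma Kden2_neg (hα : 0 < α) : 1 - (p:ℝ)^(α+1) < 0 := by
  have : 1 < (p:ℝ)^(α+1) := one_lt_rpow_alpha (p := p) (α+1) (by linarith)
  linarith

lemma K_neg_bound (hα : 0 < α) {y : ℚ_[p]} (h1 : 1 < ‖y‖) (h2 : ‖y‖ ≤ (p:ℝ)^(-r)) :
    Kfun p r α y ≤ -((p:ℝ)^((r:ℝ)*(α+1)) * ((p:ℝ)^α - 1)) := by
  have hpα := one_lt_rpow_alpha (p := p) α hα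
  have hd1 := Kden1_pos (p := p) α hα
  have hd2 := Kden2_neg (p := p) α hα
  rw [Kfun, if_pos h2]
  set A : ℝ := (1 - (p:ℝ)^α)/(1 - (p:ℝ)^(-α-1)) with hA
  set P : ℝ := (p:ℝ)^((r:ℝ)*(α+1)) with hP
  have hAneg : A < 0 := div_neg_of_neg_of_pos (by linarith) hd1
  have hPt : P ≤ ‖y‖ ^ (-α-1) := by
    have hz := Real.rpow_le_rpow_of_nonpos (lt_trans one_pos h1) h2 (by linarith : -α-1 ≤ 0)
    rw [zpow_rpow p (-r) (-α-1)] at hz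
    have he : ((-r : ℤ):ℝ) * (-α-1) = (r:ℝ)*(α+1) := by push_cast; ring
    rw [he] at hz
    exact hz
  have hmul : A * ‖y‖ ^ (-α-1) ≤ A * P := mul_le_mul_of_nonpos_left hPt (le_of_lt hAneg)
  have hbc : (p:ℝ)^(-α-1) * (p:ℝ)^(α+1) = 1 := by
    rw [← Real.rpow_add (pR_pos p)]
    norm_num
  have hsum : A + (1 - (p:ℝ)^α)/(1 - (p:ℝ)^(α+1)) = 1 - (p:ℝ)^α := by
    rw [hA]
    rw [div_add_div _ _ (ne_of_gt hd1) (ne_of_lt hd2)]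
    rw [div_eq_iff (mul_ne_zero (ne_of_gt hd1) (ne_of_lt hd2))]
    nlinarith [hbc]
  have hkey : A * P + P * (1 - (p:ℝ)^α)/(1 - (p:ℝ)^(α+1)) = -(P * ((p:ℝ)^α - 1)) := by
    have : A * P + P * (1 - (p:ℝ)^α)/(1 - (p:ℝ)^(α+1))
        = P * (A + (1 - (p:ℝ)^α)/(1 - (p:ℝ)^(α+1))) := by ring
    rw [this, hsum]
    ring
  calc A * ‖y‖ ^ (-α-1) + P * (1 - (p:ℝ)^α)/(1 - (p:ℝ)^(α+1))
      ≤ A * P + P * (1 - (p:ℝ)^α)/(1 - (p:ℝ)^(α+1)) := by linarith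
    _ = -(P * ((p:ℝ)^α - 1)) := hkey

lemma K_abs_bound (hα : 0 < α) {y : ℚ_[p]} (h1 : 1 ≤ ‖y‖) :
    |Kfun p r α y| ≤ |(1 - (p:ℝ)^α)/(1 - (p:ℝ)^(-α-1))|
      + |(p:ℝ)^((r:ℝ)*(α+1)) * (1 - (p:ℝ)^α)/(1 - (p:ℝ)^(α+1))| := by
  rw [Kfun]
  split_ifs with h
  · refine le_trans (abs_add_le _ _) (add_le_add ?_ le_rfl)
    rw [abs_mul]
    have ht0 : 0 ≤ ‖y‖ ^ (-α-1) := Real.rpow_nonneg (norm_nonneg _) _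
    have ht1 : ‖y‖ ^ (-α-1) ≤ 1 :=
      Real.rpow_le_one_of_one_le_of_nonpos h1 (by linarith)
    calc |(1 - (p:ℝ)^α)/(1 - (p:ℝ)^(-α-1))| * |‖y‖ ^ (-α-1)|
        ≤ |(1 - (p:ℝ)^α)/(1 - (p:ℝ)^(-α-1))| * 1 := by
          apply mul_le_mul_of_nonneg_left _ (abs_nonneg _)
          rw [abs_of_nonneg ht0]; exact ht1
      _ = _ := mul_one _
  · simp [abs_nonneg]
    positivity

end core2
theorem stmt16 (χ : AddChar ℚ_[p] ℂ) (hχ : ∀ y : ℚ_[p], χ y = 1 ↔ ‖y‖ ≤ 1) (r : ℤ) (hr : r < 0) (α : ℝ) (hα : 0 < α) :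
    Tendsto (fun s : ℝ => ‖Gr p χ r α s‖) (𝓝[>] (0:ℝ)) atTop ∧
    Tendsto (fun s : ℝ => Gr p χ r α s / (1 + Gr p χ r α s)) (𝓝[>] (0:ℝ)) (𝓝 1) := by
  have hp1 := pR_one_lt p
  set δ : ℝ := ((p:ℝ)^(r+1)) ^ α - (p:ℝ)^((r:ℝ)*α) with hδdef
  have hδ : 0 < δ := delta_pos p r α hα
  set ann : Set ℚ_[p] := Bset p (-r) \ Bset p 0 with hanndef
  have hannmeas : MeasurableSet ann := (Bset_meas p (-r)).diff (Bset_meas p 0)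
  have hμann_fin : μp p ann < ⊤ := lt_of_le_of_lt (measure_mono Set.diff_subset)
    (lt_of_le_of_ne le_top (measB_ne_top p (-r)))
  have hsub0 : Bset p 0 ⊆ Bset p (-r) := fun x hx =>
    le_trans hx (zpow_le_zpow_right₀ hp1.le (by omega))
  have hμann : μp p ann = ENNReal.ofReal ((p:ℝ)^(-r) - 1) := by
    rw [hanndef, measure_diff hsub0 (Bset_meas p 0).nullMeasurableSet (measB_ne_top p 0),
      measB, measB, zpow_zero, ← ENNReal.ofReal_sub _ zero_le_one]
  set m : ℝ := (μp p ann).toReal with hmdef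
  have hpm1 : 1 < (p:ℝ)^(-r) := one_lt_zpow₀ hp1 (by omega)
  have hm : 0 < m := by
    rw [hmdef, hμann, ENNReal.toReal_ofReal (by linarith)]
    linarith
  set c0 : ℝ := (p:ℝ)^((r:ℝ)*(α+1)) * ((p:ℝ)^α - 1) with hc0
  have hpαgt := one_lt_rpow_alpha (p := p) α hα
  have hc0pos : 0 < c0 :=
    mul_pos (Real.rpow_pos_of_pos (pR_pos p) _) (by linarith)
  have hKint : MeasureTheory.IntegrableOn (Kfun p r α) ann (μp p) :=
    (K_contOn r α hα hr).integrableOn_compact (ann_compact r hr)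
  have hIK : ∫ y in ann, Kfun p r α y ∂(μp p) ≤ -c0 * m := by
    calc ∫ y in ann, Kfun p r α y ∂(μp p)
        ≤ ∫ _y in ann, (-c0) ∂(μp p) := by
          apply MeasureTheory.setIntegral_mono_on hKint
            (MeasureTheory.integrableOn_const hμann_fin.ne) hannmeas
          exact fun y hy => K_neg_bound r α hα (ann_one_lt_norm r hr hy) hy.1
      _ = -c0 * m := by
          rw [MeasureTheory.setIntegral_const, smul_eq_mul, mul_comm, measureReal_def, ← hmdef]
  set IK : ℝ := ∫ y in ann, Kfun p r α y ∂(μp p) with hIKdef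
  have hIKneg : IK < 0 := lt_of_le_of_lt hIK (by nlinarith)
  set MK : ℝ := |(1 - (p:ℝ)^α)/(1 - (p:ℝ)^(-α-1))|
      + |(p:ℝ)^((r:ℝ)*(α+1)) * (1 - (p:ℝ)^α)/(1 - (p:ℝ)^(α+1))| with hMKdef
  have hMKb : ∀ y ∈ ann, |Kfun p r α y| ≤ MK := fun y hy =>
    K_abs_bound r α hα (le_of_lt (ann_one_lt_norm r hr hy))
  have hMK0 : 0 ≤ MK := add_nonneg (abs_nonneg _) (abs_nonneg _)
  set Msh : ℝ := δ⁻¹ * (μp p (Bset p 0 \ Bset p r)).toReal with hMshdef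
  have hMsh0 : 0 ≤ Msh := mul_nonneg (inv_nonneg.2 hδ.le) ENNReal.toReal_nonneg
  have hKCcont : ContinuousOn (fun y => ((Kfun p r α y : ℝ) : ℂ)) ann :=
    Complex.continuous_ofReal.comp_continuousOn (K_contOn r α hα hr)
  have hGr : ∀ s : ℝ, 0 < s → ∃ E : ℂ,
      Gr p χ r α s = ((IK : ℝ) : ℂ) * (((p:ℝ)^r / s : ℝ) : ℂ) + E ∧ ‖E‖ ≤ MK * Msh * m := by
    intro s hs
    have hRemCont := Rem_cont χ r α hχ hα hs (Bset p 0 \ Bset p r) (shell_meas_lt_top r)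
    have hKRcont : ContinuousOn (fun y => ((Kfun p r α y : ℝ) : ℂ)
        * ∫ ξ in (Bset p 0 \ Bset p r), Ffun p χ r α s y ξ ∂(μp p)) ann :=
      hKCcont.mul hRemCont.continuousOn
    refine ⟨∫ y in ann, ((Kfun p r α y : ℝ) : ℂ)
      * (∫ ξ in (Bset p 0 \ Bset p r), Ffun p χ r α s y ξ ∂(μp p)) ∂(μp p), ?_, ?_⟩
    · rw [Gr_eq]
      have hcong : ∀ y ∈ ann,
          (Kfun p r α y : ℂ) * ∫ ξ in Bset p 0, Ffun p χ r α s y ξ ∂(μp p)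
          = (Kfun p r α y : ℂ) * (((p:ℝ)^r / s : ℝ) : ℂ)
            + (Kfun p r α y : ℂ)
              * ∫ ξ in (Bset p 0 \ Bset p r), Ffun p χ r α s y ξ ∂(μp p) := by
        intro y hy
        rw [inner_split χ r α hχ hα hr hs hy.1, mul_add]
      rw [MeasureTheory.setIntegral_congr_fun hannmeas hcong]
      have hKC : MeasureTheory.IntegrableOn (fun y => ((Kfun p r α y : ℝ) : ℂ)) ann (μp p) :=
        hKint.ofReal
      have hKR : MeasureTheory.IntegrableOn (fun y => ((Kfun p r α y : ℝ) : ℂ)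
          * ∫ ξ in (Bset p 0 \ Bset p r), Ffun p χ r α s y ξ ∂(μp p)) ann (μp p) :=
        hKRcont.integrableOn_compact (ann_compact r hr)
      have hIO : ∫ a in ann, ((Kfun p r α a : ℝ) : ℂ) ∂(μp p) = ((IK : ℝ) : ℂ) := by
        rw [hIKdef]; exact integral_ofReal
      rw [MeasureTheory.integral_add (hKC.mul_const _) hKR,
        MeasureTheory.integral_mul_const, hIO]
    · have hb : ∀ y ∈ ann, ‖((Kfun p r α y : ℝ) : ℂ)
          * ∫ ξ in (Bset p 0 \ Bset p r), Ffun p χ r α s y ξ ∂(μp p)‖ ≤ MK * Msh := by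
        intro y hy
        rw [norm_mul, Complex.norm_real, Real.norm_eq_abs]
        apply mul_le_mul (hMKb y hy) ?_ (norm_nonneg _) hMK0
        exact Rem_bound χ r α hχ hα hs y
      have := MeasureTheory.norm_setIntegral_le_of_norm_le_const hμann_fin hb
      calc ‖_‖ ≤ MK * Msh * (μp p ann).toReal := this
        _ = MK * Msh * m := rfl
  have hlow : ∀ s : ℝ, 0 < s →
      ((-IK) * (p:ℝ)^r) * s⁻¹ + -(MK * Msh * m) ≤ ‖Gr p χ r α s‖ := by
    intro s hs
    obtain ⟨E, hE, hEb⟩ := hGr s hs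
    have h1 : ‖((IK : ℝ) : ℂ) * (((p:ℝ)^r / s : ℝ) : ℂ)‖ = (-IK) * ((p:ℝ)^r / s) := by
      rw [norm_mul, Complex.norm_real, Complex.norm_real, Real.norm_eq_abs, Real.norm_eq_abs,
        abs_of_neg hIKneg, abs_of_pos (div_pos (zpow_pos (pR_pos p) r) hs)]
    have h2 : ‖((IK : ℝ) : ℂ) * (((p:ℝ)^r / s : ℝ) : ℂ)‖ - ‖E‖
        ≤ ‖((IK : ℝ) : ℂ) * (((p:ℝ)^r / s : ℝ) : ℂ) + E‖ := by
      have h := norm_add_le ((((IK : ℝ) : ℂ) * (((p:ℝ)^r / s : ℝ) : ℂ)) + E) (-E)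
      rw [add_neg_cancel_right, norm_neg] at h
      linarith
    have h3 : ((-IK) * (p:ℝ)^r) * s⁻¹ = (-IK) * ((p:ℝ)^r / s) := by
      rw [div_eq_mul_inv]; ring
    rw [hE]
    calc ((-IK) * (p:ℝ)^r) * s⁻¹ + -(MK * Msh * m)
        = (-IK) * ((p:ℝ)^r / s) - MK * Msh * m := by rw [div_eq_mul_inv]; ring
      _ ≤ ‖((IK : ℝ) : ℂ) * (((p:ℝ)^r / s : ℝ) : ℂ)‖ - ‖E‖ :=
          sub_le_sub (le_of_eq h1.symm) hEb
      _ ≤ ‖((IK : ℝ) : ℂ) * (((p:ℝ)^r / s : ℝ) : ℂ) + E‖ := h2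
  have hL : 0 < (-IK) * (p:ℝ)^r := mul_pos (neg_pos.2 hIKneg) (zpow_pos (pR_pos p) r)
  have htop : Tendsto (fun s : ℝ => ((-IK) * (p:ℝ)^r) * s⁻¹ + -(MK * Msh * m))
      (𝓝[>] (0:ℝ)) atTop :=
    tendsto_atTop_add_const_right _ _ (tendsto_inv_nhdsGT_zero.const_mul_atTop hL)
  have part1 : Tendsto (fun s : ℝ => ‖Gr p χ r α s‖) (𝓝[>] (0:ℝ)) atTop := by
    apply tendsto_atTop_mono' _ ?_ htop
    filter_upwards [eventually_mem_nhdsWithin] with s hs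
    exact hlow s hs
  refine ⟨part1, ?_⟩
  have h2 : Tendsto (fun s : ℝ => ‖1 + Gr p χ r α s‖) (𝓝[>] (0:ℝ)) atTop := by
    apply tendsto_atTop_mono' _ ?_ (tendsto_atTop_add_const_right _ (-1) part1)
    apply Filter.Eventually.of_forall
    intro s
    have hst := norm_sub_norm_le (Gr p χ r α s) (-1 : ℂ)
    rw [sub_neg_eq_add, norm_neg, norm_one] at hst
    rw [show Gr p χ r α s + 1 = 1 + Gr p χ r α s from add_comm _ _] at hst
    dsimp only
    linarith
  have h3 : Tendsto (fun s : ℝ => (1 + Gr p χ r α s)⁻¹) (𝓝[>] (0:ℝ)) (𝓝 0) := by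
    rw [tendsto_zero_iff_norm_tendsto_zero]
    simp only [norm_inv]
    exact h2.inv_tendsto_atTop
  have hne : ∀ᶠ s in 𝓝[>] (0:ℝ), 1 + Gr p χ r α s ≠ 0 := by
    filter_upwards [h2.eventually_ge_atTop 1] with s hs
    intro h0
    rw [h0, norm_zero] at hs
    linarith
  have hfin : Tendsto (fun s : ℝ => 1 - (1 + Gr p χ r α s)⁻¹) (𝓝[>] (0:ℝ)) (𝓝 1) := by
    have := (tendsto_const_nhds (x := (1:ℂ)) (f := 𝓝[>] (0:ℝ))).sub h3
    simpa using this
  apply hfin.congr'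
  filter_upwards [hne] with s hs
  field_simp
  ring
end
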